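/- For all x, y ∈ ℝⁿ and every z ∈ Co^∞(x,y), one has d_⊞(x,y) = max{d_⊞(x,z), d_⊞(z,y)}. -/

import Mathlib

open Filter Finset

/-- The binary idempotent operation `⊞`. -/
noncomputable def bop (a b : ℝ) : ℝ :=
  if |b| < |a| then a else if |a| < |b| then b else (a + b) / 2

/-- The unique real `(2p+1)`-th root of `t`. -/
noncomputable def oddRoot (p : ℕ) (t : ℝ) : ℝ :=
  Real.sign t * |t| ^ ((1 : ℝ) / (2 * (p : ℝ) + 1))

/-- `ξ_I[u](α) = Card{i ∈ I : u i = α} − Card{i ∈ I : u i = −α}`. -/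
noncomputable def xiMap {ι : Type*} (I : Finset ι) (u : ι → ℝ) (α : ℝ) : ℤ :=
  ((I.filter fun i => u i = α).card : ℤ) - ((I.filter fun i => u i = -α).card : ℤ)

/-- The residual index set `J_I(u)`. -/
noncomputable def resid {ι : Type*} (I : Finset ι) (u : ι → ℝ) : Finset ι :=
  I.filter fun i => xiMap I u (u i) ≠ 0

/-- The `n`-ary extension `⊞_{i ∈ I} u i` of the binary operation `⊞`. -/
noncomputable def Fop {ι : Type*} (I : Finset ι) (u : ι → ℝ) : ℝ :=
  if h : (resid I u).Nonempty then
    if 0 < xiMap I u ((resid I u).sup' h fun i => |u i|) then (resid I u).sup' h u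
    else if xiMap I u ((resid I u).sup' h fun i => |u i|) < 0 then (resid I u).inf' h u
    else 0
  else 0

/-- The Chebyshev norm `max_{i ∈ [n]} |x i|`. -/
noncomputable def chebNorm {n : ℕ} (x : Fin n → ℝ) : ℝ := ⨆ i, |x i|

/-- The ultrametric distance `d_⊞(x,y) = max_i |x_i ⊟ y_i|`. -/
noncomputable def dB {n : ℕ} (x y : Fin n → ℝ) : ℝ := ⨆ i, |bop (x i) (-(y i))|

/-- The idempotent symmetric convex hull `Co^∞(x,y)` of two points. -/
noncomputable def coInf {n : ℕ} (x y : Fin n → ℝ) : Set (Fin n → ℝ) :=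
  { z | ∃ t r s w : ℝ, 0 ≤ t ∧ 0 ≤ r ∧ 0 ≤ s ∧ 0 ≤ w ∧
      max (max t r) (max s w) = 1 ∧
      z = fun i => Fop (Finset.univ : Finset (Fin 4)) ![t * x i, r * x i, s * y i, w * y i] }

/-! ### Auxiliary lemmas -/

lemma xiMap_neg {ι : Type*} (I : Finset ι) (u : ι → ℝ) (α : ℝ) :
    xiMap I u (-α) = -xiMap I u α := by
  simp only [xiMap, neg_neg]
  ring

lemma xiMap_zero {ι : Type*} (I : Finset ι) (u : ι → ℝ) : xiMap I u 0 = 0 := by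
  simp [xiMap]

lemma xi4 (p q u v α : ℝ) :
    xiMap (univ : Finset (Fin 4)) ![p,q,u,v] α =
      (((if p = α then 1 else 0) + (if q = α then 1 else 0) +
        (if u = α then 1 else 0) + (if v = α then 1 else 0) : ℤ) -
       ((if p = -α then 1 else 0) + (if q = -α then 1 else 0) +
        (if u = -α then 1 else 0) + (if v = -α then 1 else 0))) := by
  simp only [xiMap, Finset.card_filter]
  push_cast
  rw [Fin.sum_univ_four, Fin.sum_univ_four]
  simp [Matrix.cons_val_zero, Matrix.cons_val_one, Matrix.head_cons]
  congr

lemma master {u : Fin 4 → ℝ} (i0 : Fin 4)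
    (H1 : ∀ i, xiMap univ u (u i) ≠ 0 → |u i| ≤ |u i0|)
    (H2 : 0 < xiMap univ u (u i0)) :
    Fop univ u = u i0 := by
  have hmem : i0 ∈ resid univ u := by
    simp only [resid, Finset.mem_filter, Finset.mem_univ, true_and]
    exact fun h => H2.ne' h
  have hne : (resid univ u).Nonempty := ⟨i0, hmem⟩
  have habs : ∀ i ∈ resid univ u, |u i| ≤ |u i0| := by
    intro i hi
    refine H1 i ?_
    simpa [resid] using hi
  have hM : ((resid univ u).sup' hne fun i => |u i|) = |u i0| :=
    le_antisymm (Finset.sup'_le _ _ habs) (Finset.le_sup' (fun i => |u i|) hmem)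
  have hi0ne : u i0 ≠ 0 := by
    intro h0
    rw [h0, xiMap_zero] at H2
    exact lt_irrefl _ H2
  rw [Fop, dif_pos hne, hM]
  rcases hi0ne.lt_or_gt with hneg | hpos
  · rw [abs_of_neg hneg, xiMap_neg]
    rw [if_neg (by omega), if_pos (by omega)]
    refine le_antisymm (Finset.inf'_le _ hmem) (Finset.le_inf' _ _ ?_)
    intro i hi
    have h1 := habs i hi
    have h2 := neg_abs_le (u i)
    have h3 : |u i0| = -u i0 := abs_of_neg hneg
    linarith
  · rw [abs_of_pos hpos, if_pos H2]
    refine le_antisymm (Finset.sup'_le _ _ ?_) (Finset.le_sup' _ hmem)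
    intro i hi
    have h1 := habs i hi
    have h2 := le_abs_self (u i)
    have h3 : |u i0| = u i0 := abs_of_pos hpos
    linarith

lemma master0 {u : Fin 4 → ℝ} (H : ∀ i, xiMap univ u (u i) = 0) : Fop univ u = 0 := by
  have h : resid univ u = ∅ := by
    simp [resid, Finset.filter_eq_empty_iff, H]
  rw [Fop, dif_neg (by simp [h])]

lemma Fop_perm {ι : Type*} [Fintype ι] [DecidableEq ι] (e : ι ≃ ι) (u : ι → ℝ) :
    Fop univ (fun i => u (e i)) = Fop univ u := by
  have hfil : ∀ α, (univ.filter fun i => u (e i) = α) =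
      (univ.filter fun j => u j = α).image e.symm := by
    intro α
    ext i
    simp only [Finset.mem_filter, Finset.mem_univ, true_and, Finset.mem_image]
    constructor
    · intro h; exact ⟨e i, h, e.symm_apply_apply i⟩
    · rintro ⟨j, hj, rfl⟩; simpa using hj
  have hxi : ∀ α, xiMap univ (fun i => u (e i)) α = xiMap univ u α := by
    intro α
    simp only [xiMap, hfil, Finset.card_image_of_injective _ e.symm.injective]
  have hres : resid univ (fun i => u (e i)) = (resid univ u).image e.symm := by
    ext i
    simp only [resid, Finset.mem_filter, Finset.mem_univ, true_and, Finset.mem_image, hxi]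
    constructor
    · intro h; exact ⟨e i, h, e.symm_apply_apply i⟩
    · rintro ⟨j, hj, rfl⟩; simpa using hj
  rw [Fop, Fop, hres]
  have hne : (resid univ u).Nonempty ↔ ((resid univ u).image e.symm).Nonempty :=
    (Finset.image_nonempty).symm
  by_cases h : (resid univ u).Nonempty
  · rw [dif_pos (hne.mp h), dif_pos h]
    have hsup : ∀ f : ι → ℝ, ((resid univ u).image e.symm).sup' (hne.mp h) (fun i => f (e i)) =
        (resid univ u).sup' h f := by
      intro f
      rw [Finset.sup'_image]
      apply Finset.sup'_congr _ rfl
      intro j _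
      simp
    have hinf : ((resid univ u).image e.symm).inf' (hne.mp h) (fun i => u (e i)) =
        (resid univ u).inf' h u := by
      rw [Finset.inf'_image]
      apply Finset.inf'_congr _ rfl
      intro j _
      simp
    rw [hsup (fun i => |u i|), hsup u, hinf, hxi]
  · rw [dif_neg (fun hc => h (hne.mpr hc)), dif_neg h]

lemma Fop_swap01 (p q u v : ℝ) :
    Fop univ ![p,q,u,v] = Fop univ ![q,p,u,v] := by
  have h : ![q,p,u,v] = fun i => ![p,q,u,v] (Equiv.swap 0 1 i) := by
    funext i
    fin_cases i <;> simp [Equiv.swap_apply_def]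
  rw [h, Fop_perm]

lemma Fop_swap23 (p q u v : ℝ) :
    Fop univ ![p,q,u,v] = Fop univ ![p,q,v,u] := by
  have h : ![p,q,v,u] = fun i => ![p,q,u,v] (Equiv.swap 2 3 i) := by
    funext i
    fin_cases i <;> simp [Equiv.swap_apply_def]
  rw [h, Fop_perm]

lemma Fop_swapPairs (p q u v : ℝ) :
    Fop univ ![p,q,u,v] = Fop univ ![u,v,p,q] := by
  have h : ![u,v,p,q] = fun i => ![p,q,u,v] ((Equiv.swap 0 2).trans (Equiv.swap 1 3) i) := by
    funext i
    fin_cases i <;> simp [Equiv.swap_apply_def]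
  rw [h, Fop_perm]

lemma dd_big (a b : ℝ) (h : |b| < |a|) : |bop a (-b)| = |a| := by
  rw [bop, abs_neg, if_pos h]

lemma dd_small (a b : ℝ) (h : |a| < |b|) : |bop a (-b)| = |b| := by
  rw [bop, abs_neg, if_neg (by linarith), if_pos h, abs_neg]

lemma dd_self (a : ℝ) : |bop a (-a)| = 0 := by
  rw [bop, abs_neg, if_neg (lt_irrefl _), if_neg (lt_irrefl _)]
  simp

lemma dd_negself (a : ℝ) : |bop a (-(-a))| = |a| := by
  rw [bop, abs_neg, abs_neg, if_neg (lt_irrefl _), if_neg (lt_irrefl _)]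
  norm_num

lemma dd_bound (a b : ℝ) : |bop a (-b)| ≤ max |a| |b| := by
  rw [bop, abs_neg]
  split_ifs with h1 h2
  · exact le_max_left _ _
  · rw [abs_neg]; exact le_max_right _ _
  · have hab : |a| = |b| := le_antisymm (not_lt.1 h1) (not_lt.1 h2)
    have h2 : |(a + -b)/2| ≤ (|a| + |b|)/2 := by
      rw [abs_div]
      have h3 := abs_add_le a (-b)
      rw [abs_neg] at h3
      simp only [abs_two]
      linarith
    have h3 : (|a| + |b|)/2 ≤ max |a| |b| := by
      rcases le_total |a| |b| with h | h
      · rw [max_eq_right h]; linarith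
      · rw [max_eq_left h]; linarith
    linarith

lemma dd_nonneg (a b : ℝ) : 0 ≤ |bop a (-b)| := abs_nonneg _

lemma dstep (a b c : ℝ)
    (h : c = a ∨ c = b ∨ (|c| < |a| ∧ |b| < |a|) ∨ (|c| < |b| ∧ |a| < |b|) ∨
      (b = -a ∧ |c| ≤ |a|)) :
    |bop a (-b)| = max |bop a (-c)| |bop c (-b)| := by
  rcases h with rfl | rfl | ⟨h1, h2⟩ | ⟨h1, h2⟩ | ⟨rfl, h1⟩
  · rw [dd_self]
    exact (max_eq_right (dd_nonneg _ _)).symm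
  · rw [dd_self]
    exact (max_eq_left (dd_nonneg _ _)).symm
  · rw [dd_big a b h2, dd_big a c h1]
    have h3 : |bop c (-b)| ≤ max |c| |b| := dd_bound c b
    have h4 : max |c| |b| < |a| := max_lt h1 h2
    exact (max_eq_left (by linarith)).symm
  · rw [dd_small a b h2, dd_small c b h1]
    have h3 : |bop a (-c)| ≤ max |a| |c| := dd_bound a c
    have h4 : max |a| |c| < |b| := max_lt h2 h1
    exact (max_eq_right (by linarith)).symm
  · rw [dd_negself]
    rcases lt_or_eq_of_le h1 with hlt | heq
    · rw [dd_big a c hlt]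
      have h2 : |bop c (-(-a))| ≤ max |c| |a| := by
        have h3 := dd_bound c (-a); rwa [abs_neg] at h3
      rw [max_eq_left (by rw [max_eq_right (le_of_lt hlt)] at h2; linarith)]
    · rcases abs_eq_abs.1 heq with rfl | rfl
      · rw [dd_self, dd_negself]
        simp
      · have h2 := dd_self (-a)
        have h3 := dd_negself a
        rw [neg_neg] at h2 h3
        rw [neg_neg, h2, h3]
        simp

lemma abs_lt_ne {x y : ℝ} (h : |x| < |y|) : x ≠ y := by
  intro he; rw [he] at h; exact lt_irrefl _ h

lemma abs_lt_ne' {x y : ℝ} (h : |x| < |y|) : x ≠ -y := by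
  intro he; rw [he, abs_neg] at h; exact lt_irrefl _ h

lemma abs_gt_ne' {x y : ℝ} (h : |y| < |x|) : x ≠ -y := by
  intro he; rw [he, abs_neg] at h; exact lt_irrefl _ h

lemma coeff_neg_ne {r a : ℝ} (hr : 0 ≤ r) (ha : a ≠ 0) : r * a ≠ -a := by
  intro h
  have h2 : (r + 1) * a = 0 := by ring_nf; linarith
  rcases mul_eq_zero.1 h2 with h3 | h3
  · linarith
  · exact ha h3
lemma scalarAux2 (a b r s w : ℝ) (hr0 : 0 ≤ r) (hr1 : r ≤ 1) (hs0 : 0 ≤ s) (hs1 : s ≤ 1)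
    (hw0 : 0 ≤ w) (hws : w ≤ s) :
    Fop univ ![a, r*a, s*b, w*b] = a ∨ Fop univ ![a, r*a, s*b, w*b] = b ∨
      (|Fop univ ![a, r*a, s*b, w*b]| < |a| ∧ |b| < |a|) ∨
      (|Fop univ ![a, r*a, s*b, w*b]| < |b| ∧ |a| < |b|) ∨
      (b = -a ∧ |Fop univ ![a, r*a, s*b, w*b]| ≤ |a|) := by
  have habs_r : |r*a| ≤ |a| := by
    rw [abs_mul, abs_of_nonneg hr0]
    nlinarith [abs_nonneg a]
  have habs_w : |w*b| ≤ |s*b| := by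
    rw [abs_mul, abs_mul, abs_of_nonneg hw0, abs_of_nonneg hs0]
    nlinarith [abs_nonneg b]
  rcases lt_trichotomy |s*b| |a| with hQ | hQ | hQ
  · -- CASE A : |s*b| < |a|, the answer is a
    have ha0 : a ≠ 0 := abs_pos.1 ((abs_nonneg _).trans_lt hQ)
    have hwa : |w*b| < |a| := lt_of_le_of_lt habs_w hQ
    have h1 : ∀ i : Fin 4, xiMap univ ![a, r*a, s*b, w*b] (![a, r*a, s*b, w*b] i) ≠ 0 →
        |![a, r*a, s*b, w*b] i| ≤ |![a, r*a, s*b, w*b] (0 : Fin 4)| := by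
      intro i _
      fin_cases i
      exacts [le_refl _, habs_r, hQ.le, hwa.le]
    have h2 : (0:ℤ) < xiMap univ ![a, r*a, s*b, w*b] a := by
      rw [xi4]
      rw [if_pos rfl, if_neg (abs_lt_ne hQ), if_neg (abs_lt_ne hwa),
        if_neg (show a ≠ -a by intro h; exact ha0 (by linarith)),
        if_neg (coeff_neg_ne hr0 ha0), if_neg (abs_lt_ne' hQ), if_neg (abs_lt_ne' hwa)]
      split_ifs <;> norm_num
    exact Or.inl (master 0 h1 h2)
  · -- CASE C : |s*b| = |a|
    rcases eq_or_ne a 0 with ha0 | ha0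
    · -- C0 : a = 0, everything is 0
      have hsb0 : s*b = 0 := abs_eq_zero.1 (by rw [hQ, ha0, abs_zero])
      have hwb0 : w*b = 0 := by
        have h1 : |w*b| ≤ 0 := by rw [hsb0, abs_zero] at habs_w; exact habs_w
        exact abs_eq_zero.1 (le_antisymm h1 (abs_nonneg _))
      have hra0 : r*a = 0 := by rw [ha0, mul_zero]
      have key : Fop univ ![a, r*a, s*b, w*b] = 0 := by
        apply master0
        intro i
        fin_cases i
        · exact (congrArg (xiMap univ ![a, r*a, s*b, w*b]) ha0).trans (xiMap_zero _ _)
        · exact (congrArg (xiMap univ ![a, r*a, s*b, w*b]) hra0).trans (xiMap_zero _ _)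
        · exact (congrArg (xiMap univ ![a, r*a, s*b, w*b]) hsb0).trans (xiMap_zero _ _)
        · exact (congrArg (xiMap univ ![a, r*a, s*b, w*b]) hwb0).trans (xiMap_zero _ _)
      exact Or.inl (key.trans ha0.symm)
    rcases abs_eq_abs.1 hQ with hsb | hsb
    · -- C1 : s*b = a, the answer is a
      have hb0 : b ≠ 0 := by
        intro h; rw [h, mul_zero] at hsb; exact ha0 hsb.symm
      have naa : a ≠ -a := by intro h; exact ha0 (by linarith)
      have nsba : s*b ≠ -a := by
        intro h; exact naa (hsb.symm.trans h)
      have nwba : w*b ≠ -a := by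
        intro h
        have hb' : 0 < |b| := abs_pos.2 hb0
        have e1 : |w*b| = |a| := by rw [h, abs_neg]
        have e2 : |s*b| = |a| := hQ
        rw [abs_mul, abs_of_nonneg hw0] at e1
        rw [abs_mul, abs_of_nonneg hs0] at e2
        have hws' : w = s := mul_right_cancel₀ (ne_of_gt hb') (by linarith)
        rw [hws', hsb] at h
        exact naa h
      have h1 : ∀ i : Fin 4, xiMap univ ![a, r*a, s*b, w*b] (![a, r*a, s*b, w*b] i) ≠ 0 →
          |![a, r*a, s*b, w*b] i| ≤ |![a, r*a, s*b, w*b] (0 : Fin 4)| := by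
        intro i _
        fin_cases i
        exacts [le_refl _, habs_r, hQ.le, habs_w.trans hQ.le]
      have h2 : (0:ℤ) < xiMap univ ![a, r*a, s*b, w*b] a := by
        rw [xi4]
        rw [if_pos rfl, if_pos hsb, if_neg naa, if_neg (coeff_neg_ne hr0 ha0),
          if_neg nsba, if_neg nwba]
        split_ifs <;> norm_num
      exact Or.inl (master 0 h1 h2)
    · -- C2 : s*b = -a
      have hsbne0 : s*b ≠ 0 := by rw [hsb]; exact neg_ne_zero.2 ha0
      have hb0 : b ≠ 0 := by intro h; exact hsbne0 (by rw [h, mul_zero])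
      have hb' : 0 < |b| := abs_pos.2 hb0
      have ha' : 0 < |a| := abs_pos.2 ha0
      have naa : a ≠ -a := by intro h; exact ha0 (by linarith)
      have nsba : s*b ≠ a := by
        intro h
        rw [hsb] at h
        exact ha0 (by linarith)
      have nasb : a ≠ s*b := nsba.symm
      have conc : ∀ c' : ℝ, |c'| ≤ |a| →
          (c' = a ∨ c' = b ∨ (|c'| < |a| ∧ |b| < |a|) ∨ (|c'| < |b| ∧ |a| < |b|) ∨
            (b = -a ∧ |c'| ≤ |a|)) := by
        intro c' hc'
        rcases lt_or_eq_of_le hs1 with hs' | hs'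
        · have hab : |a| < |b| := by
            rw [← hQ, abs_mul, abs_of_nonneg hs0]
            nlinarith
          exact Or.inr (Or.inr (Or.inr (Or.inl ⟨lt_of_le_of_lt hc' hab, hab⟩)))
        · have hb : b = -a := by rw [← one_mul b, ← hs']; exact hsb
          exact Or.inr (Or.inr (Or.inr (Or.inr ⟨hb, hc'⟩)))
      rcases lt_or_eq_of_le hr1 with hr' | hr'
      · -- r < 1
        have habs_rs : |r*a| < |a| := by
          rw [abs_mul, abs_of_nonneg hr0]
          nlinarith
        have hrs2 : |r*a| < |s*b| := by rw [hQ]; exact habs_rs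
        rcases lt_or_eq_of_le hws with hw' | hw'
        · -- C2d : r < 1, w < s
          have hwsb : |w*b| < |s*b| := by
            rw [abs_mul, abs_mul, abs_of_nonneg hw0, abs_of_nonneg hs0]
            nlinarith
          have habs_ws : |w*b| < |a| := by rw [← hQ]; exact hwsb
          have hxa : xiMap univ ![a, r*a, s*b, w*b] a = 0 := by
            rw [xi4]
            rw [if_pos rfl, if_neg (abs_lt_ne habs_rs), if_neg nsba,
              if_neg (abs_lt_ne habs_ws), if_neg naa, if_neg (abs_lt_ne' habs_rs),
              if_pos hsb, if_neg (abs_lt_ne' habs_ws)]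
            norm_num
          have hxsb : xiMap univ ![a, r*a, s*b, w*b] (s*b) = 0 :=
            (congrArg (xiMap univ ![a, r*a, s*b, w*b]) hsb).trans
              (by rw [xiMap_neg, hxa, neg_zero])
          rcases lt_trichotomy |r*a| |w*b| with hc | hc | hc
          · -- D1 : answer is w*b
            have hwb0 : w*b ≠ 0 := abs_pos.1 ((abs_nonneg _).trans_lt hc)
            have h1 : ∀ i : Fin 4, xiMap univ ![a, r*a, s*b, w*b] (![a, r*a, s*b, w*b] i) ≠ 0 →
                |![a, r*a, s*b, w*b] i| ≤ |![a, r*a, s*b, w*b] (3 : Fin 4)| := by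
              intro i hi
              fin_cases i
              exacts [absurd hxa hi, hc.le, absurd hxsb hi, le_refl _]
            have h2 : (0:ℤ) < xiMap univ ![a, r*a, s*b, w*b] (w*b) := by
              rw [xi4]
              rw [if_neg (abs_lt_ne habs_ws).symm, if_neg (abs_lt_ne hc), if_pos rfl,
                if_neg (abs_lt_ne hwsb).symm, if_neg (abs_gt_ne' habs_ws),
                if_neg (abs_lt_ne' hc), if_neg (abs_gt_ne' hwsb),
                if_neg (show w*b ≠ -(w*b) by intro h; exact hwb0 (by linarith))]
              norm_num
            have key : Fop univ ![a, r*a, s*b, w*b] = w*b := master 3 h1 h2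
            have hres := conc (w*b) habs_ws.le
            rwa [← key] at hres
          · -- D3 : |r*a| = |w*b|
            rcases eq_or_ne (r*a) 0 with hz | hz
            · -- both zero, answer 0
              have hwz : w*b = 0 := abs_eq_zero.1 (by rw [← hc, hz, abs_zero])
              have key : Fop univ ![a, r*a, s*b, w*b] = 0 := by
                apply master0
                intro i
                fin_cases i
                · exact hxa
                · exact (congrArg (xiMap univ ![a, r*a, s*b, w*b]) hz).trans (xiMap_zero _ _)
                · exact hxsb
                · exact (congrArg (xiMap univ ![a, r*a, s*b, w*b]) hwz).trans (xiMap_zero _ _)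
              have hres := conc 0 (by simp)
              rwa [← key] at hres
            · rcases abs_eq_abs.1 hc with heq | heq
              · -- D3a : r*a = w*b ≠ 0, answer is r*a
                have h1 : ∀ i : Fin 4, xiMap univ ![a, r*a, s*b, w*b] (![a, r*a, s*b, w*b] i) ≠ 0 →
                    |![a, r*a, s*b, w*b] i| ≤ |![a, r*a, s*b, w*b] (1 : Fin 4)| := by
                  intro i hi
                  fin_cases i
                  exacts [absurd hxa hi, le_refl _, absurd hxsb hi, hc.symm.le]
                have h2 : (0:ℤ) < xiMap univ ![a, r*a, s*b, w*b] (r*a) := by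
                  rw [xi4]
                  rw [if_neg (abs_lt_ne habs_rs).symm, if_pos rfl,
                    if_neg (abs_lt_ne hrs2).symm, if_pos heq.symm,
                    if_neg (abs_gt_ne' habs_rs), 
                    if_neg (show r*a ≠ -(r*a) by intro h; exact hz (by linarith)),
                    if_neg (abs_gt_ne' hrs2),
                    if_neg (show w*b ≠ -(r*a) by
                      intro h; rw [← heq] at h; exact hz (by linarith))]
                  norm_num
                have key : Fop univ ![a, r*a, s*b, w*b] = r*a := master 1 h1 h2
                have hres := conc (r*a) habs_rs.le
                rwa [← key] at hres
              · -- D3b : r*a = -(w*b), answer 0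
                have hwz0 : w*b ≠ 0 := by
                  intro h; exact hz (by rw [heq, h, neg_zero])
                have hwsb' : |w*b| < |a| := habs_ws
                have heq' : w*b = -(r*a) := by rw [heq, neg_neg]
                have hx1 : xiMap univ ![a, r*a, s*b, w*b] (r*a) = 0 := by
                  rw [xi4]
                  rw [if_neg (abs_lt_ne habs_rs).symm, if_pos rfl,
                    if_neg (abs_lt_ne hrs2).symm,
                    if_neg (show w*b ≠ r*a by
                      intro h; rw [h] at heq; exact hz (by linarith)),
                    if_neg (abs_gt_ne' habs_rs),
                    if_neg (show r*a ≠ -(r*a) by intro h; exact hz (by linarith)),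
                    if_neg (abs_gt_ne' hrs2), if_pos heq']
                  norm_num
                have hx3 : xiMap univ ![a, r*a, s*b, w*b] (w*b) = 0 := by
                  rw [xi4]
                  rw [if_neg (abs_lt_ne habs_ws).symm,
                    if_neg (show r*a ≠ w*b by
                      intro h; rw [← h] at heq; exact hz (by linarith)),
                    if_neg (abs_lt_ne hwsb).symm, if_pos rfl,
                    if_neg (abs_gt_ne' habs_ws), if_pos heq,
                    if_neg (abs_gt_ne' hwsb),
                    if_neg (show w*b ≠ -(w*b) by intro h; exact hwz0 (by linarith))]
                  norm_num
                have key : Fop univ ![a, r*a, s*b, w*b] = 0 := by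
                  apply master0
                  intro i
                  fin_cases i
                  exacts [hxa, hx1, hxsb, hx3]
                have hres := conc 0 (by simp)
                rwa [← key] at hres
          · -- D2 : |w*b| < |r*a|, answer is r*a
            have hra0 : r*a ≠ 0 := abs_pos.1 ((abs_nonneg _).trans_lt hc)
            have h1 : ∀ i : Fin 4, xiMap univ ![a, r*a, s*b, w*b] (![a, r*a, s*b, w*b] i) ≠ 0 →
                |![a, r*a, s*b, w*b] i| ≤ |![a, r*a, s*b, w*b] (1 : Fin 4)| := by
              intro i hi
              fin_cases i
              exacts [absurd hxa hi, le_refl _, absurd hxsb hi, hc.le]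
            have h2 : (0:ℤ) < xiMap univ ![a, r*a, s*b, w*b] (r*a) := by
              rw [xi4]
              rw [if_neg (abs_lt_ne habs_rs).symm, if_pos rfl,
                if_neg (abs_lt_ne hrs2).symm, if_neg (abs_lt_ne hc),
                if_neg (abs_gt_ne' habs_rs),
                if_neg (show r*a ≠ -(r*a) by intro h; exact hra0 (by linarith)),
                if_neg (abs_gt_ne' hrs2), if_neg (abs_lt_ne' hc)]
              norm_num
            have key : Fop univ ![a, r*a, s*b, w*b] = r*a := master 1 h1 h2
            have hres := conc (r*a) habs_rs.le
            rwa [← key] at hres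
        · -- C2b : r < 1, w = s : answer is s*b
          have hwb_eq : w*b = s*b := by rw [hw']
          have ha_eq : a = -(s*b) := by rw [hsb, neg_neg]
          have h1 : ∀ i : Fin 4, xiMap univ ![a, r*a, s*b, w*b] (![a, r*a, s*b, w*b] i) ≠ 0 →
              |![a, r*a, s*b, w*b] i| ≤ |![a, r*a, s*b, w*b] (2 : Fin 4)| := by
            intro i _
            fin_cases i
            exacts [hQ.symm.le, hrs2.le, le_refl _, habs_w]
          have h2 : (0:ℤ) < xiMap univ ![a, r*a, s*b, w*b] (s*b) := by
            rw [xi4]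
            rw [if_neg nasb, if_neg (abs_lt_ne hrs2), if_pos rfl, if_pos hwb_eq,
              if_pos ha_eq, if_neg (abs_lt_ne' hrs2),
              if_neg (show s*b ≠ -(s*b) by intro h; exact hsbne0 (by linarith)),
              if_neg (show w*b ≠ -(s*b) by
                intro h; rw [hwb_eq] at h; exact hsbne0 (by linarith))]
            norm_num
          have key : Fop univ ![a, r*a, s*b, w*b] = s*b := master 2 h1 h2
          have hres := conc (s*b) hQ.le
          rwa [← key] at hres
      · -- r = 1
        have hra : r*a = a := by rw [hr', one_mul]
        rcases lt_or_eq_of_le hws with hw' | hw'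
        · -- C2a : r = 1, w < s : answer is a
          have hwsb : |w*b| < |s*b| := by
            rw [abs_mul, abs_mul, abs_of_nonneg hw0, abs_of_nonneg hs0]
            nlinarith
          have habs_ws : |w*b| < |a| := by rw [← hQ]; exact hwsb
          have h1 : ∀ i : Fin 4, xiMap univ ![a, r*a, s*b, w*b] (![a, r*a, s*b, w*b] i) ≠ 0 →
              |![a, r*a, s*b, w*b] i| ≤ |![a, r*a, s*b, w*b] (0 : Fin 4)| := by
            intro i _
            fin_cases i
            exacts [le_refl _, habs_r, hQ.le, habs_ws.le]
          have h2 : (0:ℤ) < xiMap univ ![a, r*a, s*b, w*b] a := by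
            rw [xi4]
            rw [if_pos rfl, if_pos hra, if_neg nsba, if_neg (abs_lt_ne habs_ws),
              if_neg naa, if_neg (show r*a ≠ -a by rw [hra]; exact naa),
              if_pos hsb, if_neg (abs_lt_ne' habs_ws)]
            norm_num
          exact Or.inl (master 0 h1 h2)
        · -- C2c : r = 1, w = s : answer is 0
          have hwb_eq : w*b = s*b := by rw [hw']
          have hxa2 : xiMap univ ![a, r*a, s*b, w*b] a = 0 := by
            rw [xi4]
            rw [if_pos rfl, if_pos hra, if_neg nsba,
              if_neg (show w*b ≠ a by rw [hwb_eq]; exact nsba),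
              if_neg naa, if_neg (show r*a ≠ -a by rw [hra]; exact naa),
              if_pos hsb, if_pos (hwb_eq.trans hsb)]
            norm_num
          have key : Fop univ ![a, r*a, s*b, w*b] = 0 := by
            apply master0
            intro i
            fin_cases i
            · exact hxa2
            · exact (congrArg (xiMap univ ![a, r*a, s*b, w*b]) hra).trans hxa2
            · exact (congrArg (xiMap univ ![a, r*a, s*b, w*b]) hsb).trans
                (by rw [xiMap_neg, hxa2, neg_zero])
            · exact (congrArg (xiMap univ ![a, r*a, s*b, w*b]) (hwb_eq.trans hsb)).trans
                (by rw [xiMap_neg, hxa2, neg_zero])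
          have hres := conc 0 (by simp)
          rwa [← key] at hres
  · -- CASE B : |a| < |s*b|, answer is s*b
    have hsbne0 : s*b ≠ 0 := abs_pos.1 ((abs_nonneg _).trans_lt hQ)
    have hb0 : b ≠ 0 := by intro h; exact hsbne0 (by rw [h, mul_zero])
    have hb' : 0 < |b| := abs_pos.2 hb0
    have hs0' : 0 < s := by
      rcases lt_or_eq_of_le hs0 with h | h
      · exact h
      · exact absurd (by rw [← h, zero_mul]) hsbne0
    have hra2 : |r*a| < |s*b| := lt_of_le_of_lt habs_r hQ
    have h1 : ∀ i : Fin 4, xiMap univ ![a, r*a, s*b, w*b] (![a, r*a, s*b, w*b] i) ≠ 0 →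
        |![a, r*a, s*b, w*b] i| ≤ |![a, r*a, s*b, w*b] (2 : Fin 4)| := by
      intro i _
      fin_cases i
      exacts [hQ.le, hra2.le, le_refl _, habs_w]
    have h2 : (0:ℤ) < xiMap univ ![a, r*a, s*b, w*b] (s*b) := by
      rw [xi4]
      rw [if_neg (abs_lt_ne hQ), if_neg (abs_lt_ne hra2), if_pos rfl,
        if_neg (abs_lt_ne' hQ), if_neg (abs_lt_ne' hra2),
        if_neg (show s*b ≠ -(s*b) by intro h; exact hsbne0 (by linarith)),
        if_neg (show w*b ≠ -(s*b) by
          intro h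
          have h2 : (w + s) * b = 0 := by ring_nf; linarith
          rcases mul_eq_zero.1 h2 with h3 | h3
          · linarith
          · exact hb0 h3)]
      split_ifs <;> norm_num
    have key : Fop univ ![a, r*a, s*b, w*b] = s*b := master 2 h1 h2
    rcases lt_or_eq_of_le hs1 with hs' | hs'
    · have hsbb : |s*b| < |b| := by
        rw [abs_mul, abs_of_nonneg hs0]
        nlinarith
      exact Or.inr (Or.inr (Or.inr (Or.inl ⟨by rw [key]; exact hsbb, lt_trans hQ hsbb⟩)))
    · exact Or.inr (Or.inl (by rw [key, hs', one_mul]))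

lemma scalarAux (a b t r s w : ℝ) (ht0 : 0 ≤ t) (hr0 : 0 ≤ r) (hs0 : 0 ≤ s) (hw0 : 0 ≤ w)
    (ht1 : t ≤ 1) (hr1 : r ≤ 1) (hs1 : s ≤ 1) (hw1 : w ≤ 1)
    (hrt : r ≤ t) (hws : w ≤ s) (hone : t = 1 ∨ s = 1) :
    Fop univ ![t*a, r*a, s*b, w*b] = a ∨ Fop univ ![t*a, r*a, s*b, w*b] = b ∨
      (|Fop univ ![t*a, r*a, s*b, w*b]| < |a| ∧ |b| < |a|) ∨
      (|Fop univ ![t*a, r*a, s*b, w*b]| < |b| ∧ |a| < |b|) ∨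
      (b = -a ∧ |Fop univ ![t*a, r*a, s*b, w*b]| ≤ |a|) := by
  rcases hone with h1 | h1
  · subst h1
    simp only [one_mul]
    exact scalarAux2 a b r s w hr0 hr1 hs0 hs1 hw0 hws
  · subst h1
    rw [Fop_swapPairs]
    simp only [one_mul]
    rcases scalarAux2 b a w t r hw0 hw1 ht0 ht1 hr0 hrt with h | h | ⟨h2, h3⟩ | ⟨h2, h3⟩ | ⟨h2, h3⟩
    · exact Or.inr (Or.inl h)
    · exact Or.inl h
    · exact Or.inr (Or.inr (Or.inr (Or.inl ⟨h2, h3⟩)))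
    · exact Or.inr (Or.inr (Or.inl ⟨h2, h3⟩))
    · have hb : b = -a := by rw [h2, neg_neg]
      have hab : |a| = |b| := by rw [h2, abs_neg]
      exact Or.inr (Or.inr (Or.inr (Or.inr ⟨hb, by rw [hab]; exact h3⟩)))

lemma scalar (a b t r s w : ℝ) (ht0 : 0 ≤ t) (hr0 : 0 ≤ r) (hs0 : 0 ≤ s) (hw0 : 0 ≤ w)
    (ht1 : t ≤ 1) (hr1 : r ≤ 1) (hs1 : s ≤ 1) (hw1 : w ≤ 1)
    (hone : t = 1 ∨ r = 1 ∨ s = 1 ∨ w = 1) :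
    Fop univ ![t*a, r*a, s*b, w*b] = a ∨ Fop univ ![t*a, r*a, s*b, w*b] = b ∨
      (|Fop univ ![t*a, r*a, s*b, w*b]| < |a| ∧ |b| < |a|) ∨
      (|Fop univ ![t*a, r*a, s*b, w*b]| < |b| ∧ |a| < |b|) ∨
      (b = -a ∧ |Fop univ ![t*a, r*a, s*b, w*b]| ≤ |a|) := by
  rcases le_total r t with hrt | htr <;> rcases le_total w s with hws | hsw
  · refine scalarAux a b t r s w ht0 hr0 hs0 hw0 ht1 hr1 hs1 hw1 hrt hws ?_
    rcases hone with h | h | h | h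
    · exact Or.inl h
    · exact Or.inl (le_antisymm ht1 (h ▸ hrt))
    · exact Or.inr h
    · exact Or.inr (le_antisymm hs1 (h ▸ hws))
  · rw [Fop_swap23]
    refine scalarAux a b t r w s ht0 hr0 hw0 hs0 ht1 hr1 hw1 hs1 hrt hsw ?_
    rcases hone with h | h | h | h
    · exact Or.inl h
    · exact Or.inl (le_antisymm ht1 (h ▸ hrt))
    · exact Or.inr (le_antisymm hw1 (h ▸ hsw))
    · exact Or.inr h
  · rw [Fop_swap01]
    refine scalarAux a b r t s w hr0 ht0 hs0 hw0 hr1 ht1 hs1 hw1 htr hws ?_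
    rcases hone with h | h | h | h
    · exact Or.inl (le_antisymm hr1 (h ▸ htr))
    · exact Or.inl h
    · exact Or.inr h
    · exact Or.inr (le_antisymm hs1 (h ▸ hws))
  · rw [Fop_swap01, Fop_swap23]
    refine scalarAux a b r t w s hr0 ht0 hw0 hs0 hr1 ht1 hw1 hs1 htr hsw ?_
    rcases hone with h | h | h | h
    · exact Or.inl (le_antisymm hr1 (h ▸ htr))
    · exact Or.inl h
    · exact Or.inr (le_antisymm hw1 (h ▸ hsw))
    · exact Or.inr h

/-- decomposition of the ultrametric distance along `Co^∞(x,y)`. -/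
theorem stmt10 (n : ℕ) (x y : Fin n → ℝ) (z : Fin n → ℝ) (hz : z ∈ coInf x y) :
    dB x y = max (dB x z) (dB z y) := by
  obtain ⟨t, r, s, w, ht0, hr0, hs0, hw0, hmax, hzdef⟩ := hz
  have ht1 : t ≤ 1 := by
    rw [← hmax]; exact le_trans (le_max_left t r) (le_max_left _ _)
  have hr1 : r ≤ 1 := by
    rw [← hmax]; exact le_trans (le_max_right t r) (le_max_left _ _)
  have hs1 : s ≤ 1 := by
    rw [← hmax]; exact le_trans (le_max_left s w) (le_max_right _ _)
  have hw1 : w ≤ 1 := by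
    rw [← hmax]; exact le_trans (le_max_right s w) (le_max_right _ _)
  have hone : t = 1 ∨ r = 1 ∨ s = 1 ∨ w = 1 := by
    rcases max_choice (max t r) (max s w) with h | h <;> rw [h] at hmax
    · rcases max_choice t r with h2 | h2 <;> rw [h2] at hmax
      · exact Or.inl hmax
      · exact Or.inr (Or.inl hmax)
    · rcases max_choice s w with h2 | h2 <;> rw [h2] at hmax
      · exact Or.inr (Or.inr (Or.inl hmax))
      · exact Or.inr (Or.inr (Or.inr hmax))
  have hpt : ∀ i, |bop (x i) (-(y i))| = max |bop (x i) (-(z i))| |bop (z i) (-(y i))| := by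
    intro i
    have hzi : z i = Fop univ ![t * x i, r * x i, s * y i, w * y i] := by rw [hzdef]
    rw [hzi]
    exact dstep (x i) (y i) _
      (scalar (x i) (y i) t r s w ht0 hr0 hs0 hw0 ht1 hr1 hs1 hw1 hone)
  rcases Nat.eq_zero_or_pos n with hn | hn
  · subst hn
    have hsup0 : ∀ f : Fin 0 → ℝ, (⨆ i, f i) = 0 := by
      intro f
      rw [iSup, Set.range_eq_empty, Real.sSup_empty]
    simp only [dB]
    rw [hsup0, hsup0, hsup0]
    norm_num
  · haveI hnem : Nonempty (Fin n) := ⟨⟨0, hn⟩⟩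
    simp only [dB]
    rw [← Finset.sup'_univ_eq_ciSup, ← Finset.sup'_univ_eq_ciSup,
      ← Finset.sup'_univ_eq_ciSup]
    refine le_antisymm (Finset.sup'_le _ _ ?_)
      (max_le (Finset.sup'_le _ _ ?_) (Finset.sup'_le _ _ ?_))
    · intro i _
      rw [hpt i]
      exact max_le_max
        (Finset.le_sup' (fun j => |bop (x j) (-(z j))|) (Finset.mem_univ i))
        (Finset.le_sup' (fun j => |bop (z j) (-(y j))|) (Finset.mem_univ i))
    · intro i _
      exact le_trans (le_trans (le_max_left _ _) (hpt i).ge)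
        (Finset.le_sup' (fun j => |bop (x j) (-(y j))|) (Finset.mem_univ i))
    · intro i _
      exact le_trans (le_trans (le_max_right _ _) (hpt i).ge)
        (Finset.le_sup' (fun j => |bop (x j) (-(y j))|) (Finset.mem_univ i))
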